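/- (Proposition 1, threshold recursion in the initial off-peak period) Let t be a time in the initial off-peak period T_off,1 and let τ_t ∈ [0, (T−t−1)·v̄] satisfy −π_off⁺ ∈ h_{t+1}(τ_t). Then −π_off⁺ ∈ h_t(τ_t + v̄); i.e., the procrastination thresholds obey the backward recursion τ_{t−1} = τ_t + v̄ in the initial off-peak period. -/

import Mathlib

open MeasureTheory Set

/-- NEM X payment for net consumption `z` with buy price `pp` and sell price `pm`. -/
noncomputable def NEMPayment (pp pm z : ℝ) : ℝ := pp * max z 0 - pm * max (-z) 0

/-- The superdifferential of a function `f : ℝ → ℝ` (viewed as a concave function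
on `[0, ∞)`) at a point `y`. -/
def superdiff (f : ℝ → ℝ) (y : ℝ) : Set ℝ :=
  {s | ∀ z, 0 ≤ z → f z ≤ f y + s * (z - y)}

/-- Data of the EV-charging / flexible-consumption dynamic program over horizon
`{0, …, T-1}` with `K` flexible loads, under NEM time-of-use prices. -/
structure EVModel (K T : ℕ) (Ω : Type) [MeasurableSpace Ω] where
  /-- underlying probability measure -/
  μ : Measure Ω
  prob : IsProbabilityMeasure μ
  /-- consumption upper bounds -/
  dbar : Fin K → ℝ
  dbar_pos : ∀ i, 0 < dbar i
  /-- device utility functions -/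
  U : Fin K → ℝ → ℝ
  U_strictConcave : ∀ i, StrictConcaveOn ℝ (Icc 0 (dbar i)) (U i)
  U_strictMono : ∀ i, StrictMonoOn (U i) (Icc 0 (dbar i))
  U_diff : ∀ i, ∀ x ∈ Icc 0 (dbar i), DifferentiableWithinAt ℝ (U i) (Icc 0 (dbar i)) x
  U_contDeriv : ∀ i, ContinuousOn (fun x => derivWithin (U i) (Icc 0 (dbar i)) x) (Icc 0 (dbar i))
  U_zero : ∀ i, U i 0 = 0
  /-- renewable processes -/
  r : ℕ → Ω → ℝ
  r_meas : ∀ t, Measurable (r t)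
  r_nonneg : ∀ t ω, 0 ≤ r t ω
  r_int : ∀ t, Integrable (r t) μ
  r_indep : ProbabilityTheory.iIndepFun r μ
  /-- time-of-use buy prices `π_t⁺` -/
  pip : ℕ → ℝ
  /-- time-of-use sell prices `π_t⁻` -/
  pim : ℕ → ℝ
  /-- maximal per-period EV charge -/
  vbar : ℝ
  vbar_pos : 0 < vbar
  /-- per-unit penalty for unmet EV demand at the horizon -/
  γ : ℝ
  /-- `π_off⁻ = min_t π_t⁻` -/
  pioff : ℝ
  pioff_le : ∀ t < T, pioff ≤ pim t
  pioff_attained : ∃ t < T, pioff = pim t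
  /-- assumption A1 -/
  A1 : ∀ t < T, 0 < pim t ∧ pim t ≤ pip t ∧ pip t < γ

namespace EVModel

variable {K T : ℕ} {Ω : Type} [MeasurableSpace Ω]

/-- Stage reward `g_t(x_t, v, d)`. -/
noncomputable def stage (M : EVModel K T Ω) (t : ℕ) (rt v : ℝ) (d : Fin K → ℝ) : ℝ :=
  ∑ i, M.U i (d i) - NEMPayment (M.pip t) (M.pim t) (v + ∑ i, d i - rt)

/-- Feasible decisions `(v, d)` given remaining demand `y`. -/
def feas (M : EVModel K T Ω) (y : ℝ) : Set (ℝ × (Fin K → ℝ)) :=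
  {p | p.1 ∈ Icc 0 (min M.vbar y) ∧ ∀ i, p.2 i ∈ Icc 0 (M.dbar i)}

/-- Value function indexed by `k = T - 1 - t`, the number of remaining periods after
the current one. -/
noncomputable def W (M : EVModel K T Ω) : ℕ → ℝ → ℝ → ℝ
  | 0 => fun y rt => sSup ((fun p : ℝ × (Fin K → ℝ) =>
      M.stage (T - 1) rt p.1 p.2 - M.γ * (y - p.1)) '' M.feas y)
  | (k + 1) => fun y rt => sSup ((fun p : ℝ × (Fin K → ℝ) =>
      M.stage (T - 2 - k) rt p.1 p.2 +
        ∫ ω, M.W k (y - p.1) (M.r (T - 1 - k) ω) ∂M.μ) '' M.feas y)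

/-- Value function `V_t(y, r_t)` (the price argument is determined by `t`). -/
noncomputable def V (M : EVModel K T Ω) (t : ℕ) (y rt : ℝ) : ℝ := M.W (T - 1 - t) y rt

/-- Expected value function `V̄_t(y) = E[V_t(y, r_t, π_t)]`. -/
noncomputable def Vbar (M : EVModel K T Ω) (t : ℕ) (y : ℝ) : ℝ := ∫ ω, M.V t y (M.r t ω) ∂M.μ

/-- Objective of the Bellman equation at time `t` in state `(y, rt)`. -/
noncomputable def bellObj (M : EVModel K T Ω) (t : ℕ) (y rt : ℝ) (p : ℝ × (Fin K → ℝ)) : ℝ :=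
  if t = T - 1 then M.stage t rt p.1 p.2 - M.γ * (y - p.1)
  else M.stage t rt p.1 p.2 + ∫ ω, M.V (t + 1) (y - p.1) (M.r (t + 1) ω) ∂M.μ

/-- `(v, d)` is an optimal solution of the Bellman equation at time `t`. -/
def IsBellmanOpt (M : EVModel K T Ω) (t : ℕ) (y rt : ℝ) (p : ℝ × (Fin K → ℝ)) : Prop :=
  p ∈ M.feas y ∧ ∀ q ∈ M.feas y, M.bellObj t y rt q ≤ M.bellObj t y rt p

/-- Superdifferential `h_t` of the concave expected value function `V̄_t`. -/
noncomputable def h (M : EVModel K T Ω) (t : ℕ) (y : ℝ) : Set ℝ := superdiff (M.Vbar t) y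

end EVModel

section NEMAux

lemma NEM_split (pp pm z z' : ℝ) :
    NEMPayment pp pm z' - NEMPayment pp pm z =
      pp * (max z' 0 - max z 0) + pm * (max (-z) 0 - max (-z') 0) := by
  unfold NEMPayment; ring

lemma NEM_mono {pp pm z z' : ℝ} (h0 : 0 ≤ pm) (h1 : pm ≤ pp) (h : z ≤ z') :
    NEMPayment pp pm z ≤ NEMPayment pp pm z' := by
  have hA : max z 0 ≤ max z' 0 := max_le_max h le_rfl
  have hB : max (-z') 0 ≤ max (-z) 0 := max_le_max (neg_le_neg h) le_rfl
  nlinarith [NEM_split pp pm z z', mul_nonneg (h0.trans h1) (sub_nonneg.2 hA),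
    mul_nonneg h0 (sub_nonneg.2 hB)]

lemma NEM_lip {pp pm z z' : ℝ} (h0 : 0 ≤ pm) (h1 : pm ≤ pp) (h : z ≤ z') :
    NEMPayment pp pm z' - NEMPayment pp pm z ≤ pp * (z' - z) := by
  have hB : max (-z') 0 ≤ max (-z) 0 := max_le_max (neg_le_neg h) le_rfl
  have e1 : max z 0 - max (-z) 0 = z := max_zero_sub_eq_self z
  have e2 : max z' 0 - max (-z') 0 = z' := max_zero_sub_eq_self z'
  have key := NEM_split pp pm z z'
  have h2 : pm * (max (-z) 0 - max (-z') 0) ≤ pp * (max (-z) 0 - max (-z') 0) :=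
    mul_le_mul_of_nonneg_right h1 (sub_nonneg.2 hB)
  have h3 : (max z' 0 - max z 0) + (max (-z) 0 - max (-z') 0) = z' - z := by
    linarith [e1, e2]
  have h4 : pp * (z' - z) =
      pp * (max z' 0 - max z 0) + pp * (max (-z) 0 - max (-z') 0) := by
    rw [← h3]; ring
  linarith

lemma NEM_neg_le {pp pm z : ℝ} (h0 : 0 ≤ pp) :
    -NEMPayment pp pm z ≤ pm * max (-z) 0 := by
  have := mul_nonneg h0 (le_max_right z 0)
  unfold NEMPayment; linarith

end NEMAux

/-- **Proposition 1 (threshold recursion in the initial off-peak period).**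
Let `t` lie in the initial off-peak period `T_off,1` of a TOU schedule
(off-peak `{0, …, t₀-1}`, on-peak `{t₀, …, t₁-1}`, final off-peak `{t₁, …, T-1}`),
and let `τ_t ∈ [0, (T - t - 1) v̄]` satisfy `-π_off⁺ ∈ h_{t+1}(τ_t)`.  Then
`-π_off⁺ ∈ h_t(τ_t + v̄)`: the procrastination thresholds obey the backward recursion
`τ_{t-1} = τ_t + v̄` in the initial off-peak period. -/
theorem prop1_offpeak_threshold_recursion (K T : ℕ) (Ω : Type) [MeasurableSpace Ω]
    (M : EVModel K T Ω)
    (t₀ t₁ : ℕ) (ht₀₁ : t₀ ≤ t₁) (ht₁T : t₁ ≤ T)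
    (πoffp πoffm πonp πonm : ℝ)
    (hoff₁ : ∀ s < t₀, M.pip s = πoffp ∧ M.pim s = πoffm)
    (hon : ∀ s, t₀ ≤ s → s < t₁ → M.pip s = πonp ∧ M.pim s = πonm)
    (hoff₂ : ∀ s, t₁ ≤ s → s < T → M.pip s = πoffp ∧ M.pim s = πoffm)
    (hpp : πoffp ≤ πonp) (hpm : πoffm ≤ πonm)
    (t : ℕ) (htoff : t < t₀) (ht : t < T - 1)
    (τ : ℝ) (hτ : τ ∈ Set.Icc 0 (((T - t - 1 : ℕ) : ℝ) * M.vbar))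
    (hτh : -πoffp ∈ M.h (t + 1) τ) :
    -πoffp ∈ M.h t (τ + M.vbar) := by
  haveI : IsProbabilityMeasure M.μ := M.prob
  have hT : t < T := by omega
  obtain ⟨hpm0, hpmp, _⟩ := M.A1 t hT
  obtain ⟨hpipt, hpimt⟩ := hoff₁ t htoff
  have hτ0 : 0 ≤ τ := hτ.1
  have hv0 : (0:ℝ) < M.vbar := M.vbar_pos
  have hπm : 0 < πoffm := hpimt ▸ hpm0
  have hπmp : πoffm ≤ πoffp := by rw [← hpipt, ← hpimt]; exact hpmp
  have hπp : 0 < πoffp := lt_of_lt_of_le hπm hπmp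
  -- affine upper bound on the continuation value from the superdifferential hypothesis
  have hFsub : ∀ x : ℝ, 0 ≤ x →
      M.Vbar (t+1) x ≤ M.Vbar (t+1) τ + (-πoffp) * (x - τ) := hτh
  -- Bellman representation of `V t`
  have hVeq : ∀ y rt : ℝ, M.V t y rt =
      sSup ((fun p : ℝ × (Fin K → ℝ) =>
        M.stage t rt p.1 p.2 + M.Vbar (t+1) (y - p.1)) '' M.feas y) := by
    intro y rt
    have h1 : T - 1 - t = (T - 2 - t) + 1 := by omega
    have h2 : T - 2 - (T - 2 - t) = t := by omega
    have h3 : T - 1 - (T - 2 - t) = t + 1 := by omega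
    have h4 : T - 1 - (t + 1) = T - 2 - t := by omega
    simp only [EVModel.V, EVModel.Vbar, h1, EVModel.W, h2, h3, h4]
  -- feasibility of the zero decision
  have hfeas0 : ∀ y : ℝ, 0 ≤ y →
      ((⟨0, fun _ => 0⟩ : ℝ × (Fin K → ℝ))) ∈ M.feas y := by
    intro y hy
    exact ⟨⟨le_rfl, le_min hv0.le hy⟩, fun i => ⟨le_rfl, (M.dbar_pos i).le⟩⟩
  have hne : ∀ (y rt : ℝ), 0 ≤ y →
      ((fun p : ℝ × (Fin K → ℝ) =>
        M.stage t rt p.1 p.2 + M.Vbar (t+1) (y - p.1)) '' M.feas y).Nonempty :=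
    fun y rt hy => ⟨_, ⟨_, hfeas0 y hy, rfl⟩⟩
  -- utility sum bound
  have hU : ∀ d : Fin K → ℝ, (∀ i, d i ∈ Icc 0 (M.dbar i)) →
      ∑ i, M.U i (d i) ≤ ∑ i, M.U i (M.dbar i) := by
    intro d hd
    refine Finset.sum_le_sum fun i _ => ?_
    exact (M.U_strictMono i).monotoneOn (hd i) ⟨(M.dbar_pos i).le, le_rfl⟩ (hd i).2
  -- uniform upper bound on the Bellman objective
  have hub : ∀ (y rt : ℝ), 0 ≤ y → ∀ p ∈ M.feas y,
      M.stage t rt p.1 p.2 + M.Vbar (t+1) (y - p.1) ≤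
        (∑ i, M.U i (M.dbar i)) + πoffm * max rt 0
          + (M.Vbar (t+1) τ + πoffp * (y + τ)) := by
    intro y rt hy p hp
    obtain ⟨⟨hv0', hv1⟩, hd⟩ := hp
    have hvy : p.1 ≤ y := le_trans hv1 (min_le_right _ _)
    have hsum0 : 0 ≤ ∑ i, p.2 i := Finset.sum_nonneg fun i _ => (hd i).1
    have hstage : M.stage t rt p.1 p.2 ≤ (∑ i, M.U i (M.dbar i)) + πoffm * max rt 0 := by
      unfold EVModel.stage
      have h1 := hU _ hd
      have h2 : -NEMPayment (M.pip t) (M.pim t) (p.1 + ∑ i, p.2 i - rt)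
          ≤ M.pim t * max (-(p.1 + ∑ i, p.2 i - rt)) 0 :=
        NEM_neg_le (by rw [hpipt]; exact hπp.le)
      have h3 : max (-(p.1 + ∑ i, p.2 i - rt)) 0 ≤ max rt 0 :=
        max_le_max (by linarith) le_rfl
      have h4 : M.pim t * max (-(p.1 + ∑ i, p.2 i - rt)) 0 ≤ πoffm * max rt 0 := by
        rw [hpimt]; exact mul_le_mul_of_nonneg_left h3 hπm.le
      linarith
    have h5 : M.Vbar (t+1) (y - p.1) ≤ M.Vbar (t+1) τ + πoffp * (y + τ) := by
      have h6 := hFsub (y - p.1) (by linarith)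
      have h7 : (-πoffp) * (y - p.1 - τ) ≤ πoffp * (y + τ) := by
        nlinarith [mul_nonneg hπp.le (by linarith : (0:ℝ) ≤ 2*y - p.1)]
      linarith
    linarith
  have hbdd : ∀ (y rt : ℝ), 0 ≤ y →
      BddAbove ((fun p : ℝ × (Fin K → ℝ) =>
        M.stage t rt p.1 p.2 + M.Vbar (t+1) (y - p.1)) '' M.feas y) := by
    intro y rt hy
    refine ⟨(∑ i, M.U i (M.dbar i)) + πoffm * max rt 0
      + (M.Vbar (t+1) τ + πoffp * (y + τ)), fun a ha => ?_⟩
    obtain ⟨p, hp, rfl⟩ := ha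
    exact hub y rt hy p hp
  -- lower bound `Vbar (t+1) y ≤ V t y rt` (used for integrability)
  have hlb : ∀ (y rt : ℝ), 0 ≤ y → 0 ≤ rt → M.Vbar (t+1) y ≤ M.V t y rt := by
    intro y rt hy hrt
    rw [hVeq]
    refine le_trans ?_ (le_csSup (hbdd y rt hy) ⟨_, hfeas0 y hy, rfl⟩)
    have e0 : M.stage t rt 0 (fun _ => (0:ℝ)) =
        - NEMPayment (M.pip t) (M.pim t) (-rt) := by
      unfold EVModel.stage
      simp [M.U_zero]
    have e1 : max (-(-rt)) 0 = rt := by rw [neg_neg]; exact max_eq_left hrt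
    have e2 : max (-rt) 0 = 0 := max_eq_right (neg_nonpos.mpr hrt)
    have e3 : NEMPayment (M.pip t) (M.pim t) (-rt) = - (M.pim t * rt) := by
      unfold NEMPayment; rw [e1, e2]; ring
    have h8 : 0 ≤ M.pim t * rt := mul_nonneg hpm0.le hrt
    simp only [e0, e3, sub_zero]
    linarith
  -- pointwise key inequality
  have hkey : ∀ (rt z : ℝ), 0 ≤ z →
      M.V t z rt ≤ M.V t (τ + M.vbar) rt + (-πoffp) * (z - (τ + M.vbar)) := by
    intro rt z hz
    rw [hVeq z rt]
    refine csSup_le (hne z rt hz) ?_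
    rintro a ⟨p, hp, rfl⟩
    obtain ⟨⟨hpv0, hpv1⟩, hpd⟩ := hp
    have hvz : p.1 ≤ z := le_trans hpv1 (min_le_right _ _)
    have hvv : p.1 ≤ M.vbar := le_trans hpv1 (min_le_left _ _)
    have hq : ((M.vbar, p.2) : ℝ × (Fin K → ℝ)) ∈ M.feas (τ + M.vbar) :=
      ⟨⟨hv0.le, le_min le_rfl (by linarith)⟩, hpd⟩
    have hsup : M.stage t rt M.vbar p.2 + M.Vbar (t+1) ((τ + M.vbar) - M.vbar)
        ≤ M.V t (τ + M.vbar) rt := by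
      rw [hVeq]
      exact le_csSup (hbdd _ rt (by linarith)) ⟨_, hq, rfl⟩
    have he : (τ + M.vbar) - M.vbar = τ := by ring
    rw [he] at hsup
    have hFz : M.Vbar (t+1) (z - p.1) ≤
        M.Vbar (t+1) τ + (-πoffp) * (z - p.1 - τ) := hFsub _ (by linarith)
    have hlip : M.stage t rt p.1 p.2 - M.stage t rt M.vbar p.2
        ≤ πoffp * (M.vbar - p.1) := by
      unfold EVModel.stage
      have h9 := NEM_lip (pp := M.pip t) (pm := M.pim t) hpm0.le hpmp
        (show p.1 + ∑ i, p.2 i - rt ≤ M.vbar + ∑ i, p.2 i - rt by linarith)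
      have h10 : M.pip t * ((M.vbar + ∑ i, p.2 i - rt) - (p.1 + ∑ i, p.2 i - rt))
          = πoffp * (M.vbar - p.1) := by rw [hpipt]; ring
      linarith
    have halg : πoffp * (M.vbar - p.1) + (-πoffp) * (z - p.1 - τ)
        = (-πoffp) * (z - (τ + M.vbar)) := by ring
    show M.stage t rt p.1 p.2 + M.Vbar (t+1) (z - p.1)
        ≤ M.V t (τ + M.vbar) rt + (-πoffp) * (z - (τ + M.vbar))
    linarith
  -- monotonicity in the renewable argument, hence measurability
  have hmono : ∀ y : ℝ, 0 ≤ y → Monotone (fun rt => M.V t y rt) := by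
    intro y hy rt rt' hr
    simp only
    rw [hVeq, hVeq]
    refine csSup_le (hne y rt hy) ?_
    rintro a ⟨p, hp, rfl⟩
    have hobj : M.stage t rt p.1 p.2 ≤ M.stage t rt' p.1 p.2 := by
      unfold EVModel.stage
      have h11 := NEM_mono (pp := M.pip t) (pm := M.pim t) hpm0.le hpmp
        (show p.1 + ∑ i, p.2 i - rt' ≤ p.1 + ∑ i, p.2 i - rt by linarith)
      linarith
    show M.stage t rt p.1 p.2 + M.Vbar (t+1) (y - p.1) ≤ _
    exact le_trans (by linarith [le_refl (M.Vbar (t+1) (y - p.1))] :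
        M.stage t rt p.1 p.2 + M.Vbar (t+1) (y - p.1)
          ≤ M.stage t rt' p.1 p.2 + M.Vbar (t+1) (y - p.1))
      (le_csSup (hbdd y rt' hy) ⟨p, hp, rfl⟩)
  -- integrability of `ω ↦ V t y (r t ω)`
  have hint : ∀ y : ℝ, 0 ≤ y → Integrable (fun ω => M.V t y (M.r t ω)) M.μ := by
    intro y hy
    have hmeas : Measurable fun ω => M.V t y (M.r t ω) :=
      ((hmono y hy).measurable).comp (M.r_meas t)
    set C : ℝ := (∑ i, M.U i (M.dbar i)) + (M.Vbar (t+1) τ + πoffp * (y + τ)) with hC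
    set A : ℝ := max (|M.Vbar (t+1) y|) (|C|) with hA
    have hApos : 0 ≤ A := le_trans (abs_nonneg _) (le_max_left _ _)
    have hgint : Integrable (fun ω => A + πoffm * M.r t ω) M.μ :=
      (integrable_const A).add ((M.r_int t).const_mul πoffm)
    refine hgint.mono hmeas.aestronglyMeasurable (ae_of_all _ fun ω => ?_)
    have hr0 := M.r_nonneg t ω
    have h5 : 0 ≤ πoffm * M.r t ω := mul_nonneg hπm.le hr0
    have hub' : M.V t y (M.r t ω) ≤ A + πoffm * M.r t ω := by
      have h1 : M.V t y (M.r t ω) ≤ (∑ i, M.U i (M.dbar i)) + πoffm * max (M.r t ω) 0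
          + (M.Vbar (t+1) τ + πoffp * (y + τ)) := by
        rw [hVeq]
        refine csSup_le (hne y _ hy) ?_
        rintro a ⟨p, hp, rfl⟩
        exact hub y _ hy p hp
      have h2 : max (M.r t ω) 0 = M.r t ω := max_eq_left hr0
      have h3 : C ≤ A := le_trans (le_abs_self _) (le_max_right _ _)
      rw [h2] at h1
      rw [hC] at h3
      linarith
    have hlb' : -(A + πoffm * M.r t ω) ≤ M.V t y (M.r t ω) := by
      have h1 := hlb y (M.r t ω) hy hr0
      have h4 : -A ≤ M.Vbar (t+1) y := by
        have := neg_abs_le (M.Vbar (t+1) y)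
        have := le_max_left (|M.Vbar (t+1) y|) (|C|)
        linarith
      linarith
    rw [Real.norm_eq_abs, Real.norm_eq_abs,
      abs_of_nonneg (by linarith : (0:ℝ) ≤ A + πoffm * M.r t ω)]
    exact abs_le.mpr ⟨hlb', hub'⟩
  -- conclude by integrating the pointwise inequality
  show ∀ z, 0 ≤ z → M.Vbar t z ≤ M.Vbar t (τ + M.vbar) + (-πoffp) * (z - (τ + M.vbar))
  intro z hz
  have hy' : (0:ℝ) ≤ τ + M.vbar := by linarith
  have hintz := hint z hz
  have hinty := hint _ hy'
  have hmonoI : ∫ ω, M.V t z (M.r t ω) ∂M.μ ≤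
      ∫ ω, (M.V t (τ + M.vbar) (M.r t ω) + (-πoffp) * (z - (τ + M.vbar))) ∂M.μ :=
    integral_mono hintz (hinty.add (integrable_const _))
      (fun ω => hkey (M.r t ω) z hz)
  have hsplit : ∫ ω, (M.V t (τ + M.vbar) (M.r t ω) + (-πoffp) * (z - (τ + M.vbar))) ∂M.μ
      = M.Vbar t (τ + M.vbar) + (-πoffp) * (z - (τ + M.vbar)) := by
    rw [integral_add hinty (integrable_const _), integral_const]
    simp [EVModel.Vbar]
  calc M.Vbar t z = ∫ ω, M.V t z (M.r t ω) ∂M.μ := rfl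
    _ ≤ _ := hmonoI
    _ = _ := hsplit
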